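/- arXiv:2305.04373 — 11 statements merged into one kernel-verified Lean document; each statement's English description precedes it below -/
import Mathlib

section
/- In Contract 1 with the seller as the (unique) contract player, the inducible sets at the two buyer-owned nodes computed by the InducibleRegion algorithm are singletons: for all real x, y, λ with 0 < x < y and λ > 0, threatenB({u²}, {u¹}) ∪ threatenB({u¹}, {u²}) = {u²} and threatenB({u⁴}, {u³}) ∪ threatenB({u³}, {u⁴}) = {u⁴}. -/
/-- Threats against the buyer (the follower): compare the buyer's coordinate. -/
def threatenB (A B : Set (ℝ × ℝ)) : Set (ℝ × ℝ) := {a ∈ A | ∃ b ∈ B, b.1 < a.1}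

/-- In Contract 1 with the seller as the (unique) contract player,
the inducible sets at the two buyer-owned nodes are singletons {u²} and {u⁴}. -/
theorem contract1_seller_buyerNodes (x y lam : ℝ)
    (hx : 0 < x) (hxy : x < y) (hlam : 0 < lam) :
    let u1 : ℝ × ℝ := (y - x - lam, x)
    let u2 : ℝ × ℝ := (y - x, x)
    let u3 : ℝ × ℝ := (-x - lam, x)
    let u4 : ℝ × ℝ := (0, -lam)
    (threatenB {u2} {u1} ∪ threatenB {u1} {u2} = {u2}) ∧
    (threatenB {u4} {u3} ∪ threatenB {u3} {u4} = {u4}) := by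
  intro u1 u2 u3 u4
  constructor
  · ext p
    simp only [threatenB, Set.mem_union, Set.mem_setOf_eq, Set.mem_singleton_iff, u1, u2]
    constructor
    · rintro (⟨h, _⟩ | ⟨h, _, rfl, hlt⟩)
      · exact h
      · subst h; simp at hlt; linarith
    · rintro rfl
      exact Or.inl ⟨rfl, _, rfl, by simp; linarith⟩
  · ext p
    simp only [threatenB, Set.mem_union, Set.mem_setOf_eq, Set.mem_singleton_iff, u3, u4]
    constructor
    · rintro (⟨h, _⟩ | ⟨h, _, rfl, hlt⟩)
      · exact h
      · subst h; simp at hlt; linarith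
    · rintro rfl
      exact Or.inl ⟨rfl, _, rfl, by simp; linarith⟩
end

section
/- In Contract 1 with the seller as leading contract player, the inducible region at the root is {u¹, u², u⁴}: for all real x, y, λ with 0 < x < y, λ > 0, and y - x - λ > 0, one has {u², u⁴} ∪ threatenB({u¹, u², u³, u⁴}, {u², u⁴}) = {u¹, u², u⁴}. -/
/-- In Contract 1 with the seller as leading contract player, the
inducible region at the root is {u¹, u², u⁴}. -/
theorem contract1_seller_root_inducible (x y lam : ℝ)
    (hx : 0 < x) (hxy : x < y) (hlam : 0 < lam) (hth : y - x - lam > 0) :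
    let u1 : ℝ × ℝ := (y - x - lam, x)
    let u2 : ℝ × ℝ := (y - x, x)
    let u3 : ℝ × ℝ := (-x - lam, x)
    let u4 : ℝ × ℝ := (0, -lam)
    ({u2, u4} : Set (ℝ × ℝ)) ∪ threatenB {u1, u2, u3, u4} {u2, u4} = {u1, u2, u4} := by
  intro u1 u2 u3 u4
  ext p
  simp only [threatenB, Set.mem_union, Set.mem_insert_iff, Set.mem_singleton_iff,
    Set.mem_setOf_eq, u1, u2, u3, u4]
  constructor
  · rintro (h | ⟨h, b, hb, hlt⟩)
    · tauto
    · rcases h with h | h | h | h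
      · tauto
      · tauto
      · exfalso
        subst h
        rcases hb with hb | hb <;> subst hb <;> simp at hlt <;> linarith
      · tauto
  · rintro (h | h | h)
    · right
      exact ⟨Or.inl h, (0, -lam), Or.inr rfl, by subst h; simpa using hth⟩
    · tauto
    · tauto
end

section
/- Contract 1 is not Stackelberg resilient with the seller as leading contract player: for all real x, y, λ with 0 < x < y, λ > 0 and y - x - λ > 0, within the inducible region I = {u¹, u², u⁴} the leaf u¹ is the weakly malicious seller's optimal choice, i.e. (i) for every v ∈ I, v.2 ≤ u¹.2, (ii) for every v ∈ I with v.2 = u¹.2, u¹.1 ≤ v.1 with u¹ being the unique such minimizer among the seller-utility maximizers, and (iii) u¹ ≠ u², so the induced outcome differs from the SPE outcome u² (in particular u¹.1 < u².1, so the buyer is strictly worse off). -/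
/-- Contract 1 is not Stackelberg resilient with the seller as
leading contract player: within the inducible region I = {u¹, u², u⁴} the leaf
u¹ is the weakly malicious seller's optimal choice and differs from the SPE
outcome u², with the buyer strictly worse off. -/
theorem contract1_not_resilient_seller (x y lam : ℝ)
    (hx : 0 < x) (hxy : x < y) (hlam : 0 < lam) (hth : y - x - lam > 0) :
    let u1 : ℝ × ℝ := (y - x - lam, x)
    let u2 : ℝ × ℝ := (y - x, x)
    let u4 : ℝ × ℝ := (0, -lam)
    let I : Set (ℝ × ℝ) := {u1, u2, u4}
    (∀ v ∈ I, v.2 ≤ u1.2) ∧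
    (∀ v ∈ I, v.2 = u1.2 → u1.1 ≤ v.1) ∧
    (∀ v ∈ I, v.2 = u1.2 → v ≠ u1 → u1.1 < v.1) ∧
    u1 ≠ u2 ∧ u1.1 < u2.1 := by
  intro u1 u2 u4 I
  refine ⟨?_, ?_, ?_, ?_, ?_⟩
  · rintro v (rfl|rfl|rfl) <;> simp [u1, u2, u4] <;> linarith
  · rintro v (rfl|rfl|rfl) <;> simp [u1, u2, u4] <;> first | linarith | (intro h; linarith)
  · rintro v (rfl|rfl|rfl) hv hne
    · exact absurd rfl hne
    · simp [u1, u2]; linarith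
    · exfalso; simp [u1, u4] at hv; linarith
  · simp [u1, u2]; intro h; linarith
  · simp [u1, u2]; linarith
end

section
/- In Contract 1 with the buyer as leading contract player, the Stackelberg outcome coincides with the SPE: for all real x, y, λ with 0 < x < y and λ > 0, one has threatenS({u¹, u²}, {u³, u⁴}) = {u¹, u²}, and within the resulting inducible region {u¹, u², u³} the leaf u² strictly maximizes the buyer's utility: u².1 > u¹.1 and u².1 > u³.1. -/
/-- Threats against the seller (the follower): compare the seller's coordinate. -/
def threatenS (A B : Set (ℝ × ℝ)) : Set (ℝ × ℝ) := {a ∈ A | ∃ b ∈ B, b.2 < a.2}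

/-- In Contract 1 with the buyer as leading contract player, the
Stackelberg outcome coincides with the SPE: threatenS({u¹,u²},{u³,u⁴}) = {u¹,u²},
and within the inducible region {u¹,u²,u³} the leaf u² strictly maximizes the
buyer's utility. -/
theorem contract1_buyer_leading_SPE (x y lam : ℝ)
    (hx : 0 < x) (hxy : x < y) (hlam : 0 < lam) :
    let u1 : ℝ × ℝ := (y - x - lam, x)
    let u2 : ℝ × ℝ := (y - x, x)
    let u3 : ℝ × ℝ := (-x - lam, x)
    let u4 : ℝ × ℝ := (0, -lam)
    (threatenS {u1, u2} {u3, u4} = {u1, u2}) ∧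
    u2.1 > u1.1 ∧ u2.1 > u3.1 := by
  intro u1 u2 u3 u4
  refine ⟨?_, by simp [u1, u2]; linarith, by simp [u2, u3]; linarith⟩
  ext a
  simp only [threatenS, Set.mem_setOf_eq, Set.mem_insert_iff, Set.mem_singleton_iff]
  constructor
  · rintro ⟨h, _⟩; exact h
  · intro h
    refine ⟨h, ⟨u4, Or.inr rfl, ?_⟩⟩
    rcases h with h | h <;> simp [h, u1, u2, u4] <;> linarith
end

section
/- In Contract 2 with the seller as leading contract player, the inducible set at the left buyer-owned node is {u¹, u³}: for all real x, x', y, λ, γ with 0 < γ < 1, y > x > x' > 0, λ > 0 and γ·x < (1-γ)·λ, one has threatenB({u³}, {u¹, u²}) ∪ threatenB({u¹, u²}, {u³}) = {u¹, u³}. -/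
/-- In Contract 2 with the seller as leading contract player, the
inducible set at the left buyer-owned node is {u¹, u³}. -/
theorem contract2_seller_leftNode (x x' y lam γ : ℝ)
    (hγ0 : 0 < γ) (hγ1 : γ < 1) (hxy : x < y) (hx'x : x' < x) (hx' : 0 < x')
    (hlam : 0 < lam) (hdep : γ * x < (1 - γ) * lam) :
    let u1 : ℝ × ℝ := (y, -x')
    let u2 : ℝ × ℝ := (y * γ - (x + lam) * (1 - γ), x * (1 - γ) - lam * γ - x')
    let u3 : ℝ × ℝ := (y - x, x - x')
    threatenB {u3} {u1, u2} ∪ threatenB {u1, u2} {u3} = {u1, u3} := by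
  intro u1 u2 u3
  have hx : 0 < x := hx'.trans hx'x
  have h21 : u2.1 < u3.1 := by
    show y * γ - (x + lam) * (1 - γ) < y - x
    nlinarith [mul_pos (sub_pos.mpr hγ1) (hx.trans hxy)]
  have h31 : u3.1 < u1.1 := by
    show y - x < y
    linarith
  ext p
  constructor
  · rintro (⟨hp, -⟩ | ⟨hp, b, rfl, hb⟩)
    · exact Or.inr hp
    · rcases hp with hp | hp
      · exact Or.inl hp
      · subst hp; exact absurd hb h21.asymm
  · rintro (hp | hp)
    · exact Or.inr ⟨Or.inl hp, u3, Set.mem_singleton _, hp ▸ h31⟩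
    · exact Or.inl ⟨hp, u2, Or.inr rfl, hp ▸ h21⟩
end

section
/- In Contract 2 with the seller as leading contract player, the inducible set at the right buyer-owned node is {u⁵, u⁶}: for all real x, x', y, λ, γ with 0 < γ < 1, y > x > x' > 0, λ > 0 and γ·λ < (1-γ)·x, one has threatenB({u⁴}, {u⁵, u⁶}) ∪ threatenB({u⁵, u⁶}, {u⁴}) = {u⁵, u⁶}. -/
/-- In Contract 2 with the seller as leading contract player, the
inducible set at the right buyer-owned node is {u⁵, u⁶}. -/
theorem contract2_seller_rightNode (x x' y lam γ : ℝ)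
    (hγ0 : 0 < γ) (hγ1 : γ < 1) (hxy : x < y) (hx'x : x' < x) (hx' : 0 < x')
    (hlam : 0 < lam) (hdep : γ * lam < (1 - γ) * x) :
    let u4 : ℝ × ℝ := (-x, x)
    let u5 : ℝ × ℝ := (-(x + lam) * γ, x * γ - lam * (1 - γ))
    let u6 : ℝ × ℝ := (0, 0)
    threatenB {u4} {u5, u6} ∪ threatenB {u5, u6} {u4} = {u5, u6} := by
  intro u4 u5 u6
  have hx : 0 < x := lt_trans hx' hx'x
  have h45 : (-x : ℝ) < -(x + lam) * γ := by nlinarith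
  have h46 : (-x : ℝ) < 0 := by linarith
  ext p
  simp only [threatenB, Set.mem_union, Set.mem_setOf_eq, Set.mem_insert_iff,
    Set.mem_singleton_iff, u4, u5, u6]
  constructor
  · rintro (⟨hp, b, (hb | hb), hlt⟩ | ⟨hp, _⟩)
    · exfalso; subst hp hb; simp at hlt; nlinarith
    · exfalso; subst hp hb; simp at hlt; linarith
    · exact hp
  · rintro (hp | hp)
    · exact Or.inr ⟨Or.inl hp, (-x, x), rfl, by rw [hp]; exact h45⟩
    · exact Or.inr ⟨Or.inr hp, (-x, x), rfl, by rw [hp]; exact h46⟩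
end

section
/- Contract 2 is Stackelberg resilient when the seller is leading contract player: for all real x, x', y, λ, γ with 0 < γ < 1/2, y > x > x' > 0, λ > 0, γ·x < (1-γ)·λ and γ·λ < (1-γ)·x, in the seller's root inducible region I := {u¹, u³, u⁵, u⁶} ∪ threatenB({u¹, u², u³, u⁴, u⁵, u⁶}, {u¹, u³, u⁵, u⁶}), the honest outcome u³ strictly maximizes the seller's utility: u³ ∈ I and for every v ∈ I with v ≠ u³ one has v.2 < u³.2. Hence the seller's optimal contract induces the SPE outcome u³. -/
/-- Contract 2 is Stackelberg resilient when the seller is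
leading contract player: in the seller's root inducible region, the honest
outcome u³ strictly maximizes the seller's utility. -/
theorem contract2_seller_resilient (x x' y lam γ : ℝ)
    (hγ0 : 0 < γ) (hγ1 : γ < 1 / 2) (hxy : x < y) (hx'x : x' < x) (hx' : 0 < x')
    (hlam : 0 < lam) (hdep1 : γ * x < (1 - γ) * lam) (hdep2 : γ * lam < (1 - γ) * x) :
    let u1 : ℝ × ℝ := (y, -x')
    let u2 : ℝ × ℝ := (y * γ - (x + lam) * (1 - γ), x * (1 - γ) - lam * γ - x')
    let u3 : ℝ × ℝ := (y - x, x - x')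
    let u4 : ℝ × ℝ := (-x, x)
    let u5 : ℝ × ℝ := (-(x + lam) * γ, x * γ - lam * (1 - γ))
    let u6 : ℝ × ℝ := (0, 0)
    let I : Set (ℝ × ℝ) :=
      {u1, u3, u5, u6} ∪ threatenB {u1, u2, u3, u4, u5, u6} {u1, u3, u5, u6}
    u3 ∈ I ∧ ∀ v ∈ I, v ≠ u3 → v.2 < u3.2 := by
  intro u1 u2 u3 u4 u5 u6 I
  have hx : 0 < x := lt_trans hx' hx'x
  constructor
  · left; right; left; rfl
  · rintro v hv hne
    have hv6 : v = u1 ∨ v = u2 ∨ v = u3 ∨ v = u4 ∨ v = u5 ∨ v = u6 := by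
      rcases hv with hv | hv
      · rcases hv with h | h | h | h
        · exact Or.inl h
        · exact Or.inr (Or.inr (Or.inl h))
        · exact Or.inr (Or.inr (Or.inr (Or.inr (Or.inl h))))
        · exact Or.inr (Or.inr (Or.inr (Or.inr (Or.inr h))))
      · rcases hv.1 with h | h | h | h | h | h
        · exact Or.inl h
        · exact Or.inr (Or.inl h)
        · exact Or.inr (Or.inr (Or.inl h))
        · exact Or.inr (Or.inr (Or.inr (Or.inl h)))
        · exact Or.inr (Or.inr (Or.inr (Or.inr (Or.inl h))))
        · exact Or.inr (Or.inr (Or.inr (Or.inr (Or.inr h))))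
    rcases hv6 with h | h | h | h | h | h
    · subst h; show -x' < x - x'; linarith
    · subst h; show x * (1 - γ) - lam * γ - x' < x - x'; nlinarith
    · exact absurd h hne
    · -- u4 is not in I
      exfalso
      subst h
      rcases hv with hv | hv
      · rcases hv with h | h | h | h <;>
          simp only [u1, u3, u4, u5, u6, Set.mem_singleton_iff, Prod.mk.injEq] at h <;> nlinarith [h.1, h.2]
      · obtain ⟨b, hb, hblt⟩ := hv.2
        rcases hb with h | h | h | h <;> subst h <;>
          simp only [u1, u3, u4, u5, u6] at hblt <;> nlinarith
    · subst h; show x * γ - lam * (1 - γ) < x - x'; nlinarith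
    · subst h; show (0:ℝ) < x - x'; linarith
end

section
/- In Contract 2 with the buyer as leading contract player, the inducible sets at the two seller-owned deepest nodes are singletons: for all real x, x', y, λ, γ with 0 < γ < 1, y > x > x' > 0, λ > 0, γ·λ < (1-γ)·x and γ·x < (1-γ)·λ, one has threatenS({u¹}, {u²}) ∪ threatenS({u²}, {u¹}) = {u²} and threatenS({u⁵}, {u⁶}) ∪ threatenS({u⁶}, {u⁵}) = {u⁶}. -/
/-- In Contract 2 with the buyer as leading contract player, the
inducible sets at the two seller-owned deepest nodes are the singletons {u²}
and {u⁶}. -/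
theorem contract2_buyer_sellerNodes (x x' y lam γ : ℝ)
    (hγ0 : 0 < γ) (hγ1 : γ < 1) (hxy : x < y) (hx'x : x' < x) (hx' : 0 < x')
    (hlam : 0 < lam) (hdep1 : γ * lam < (1 - γ) * x) (hdep2 : γ * x < (1 - γ) * lam) :
    let u1 : ℝ × ℝ := (y, -x')
    let u2 : ℝ × ℝ := (y * γ - (x + lam) * (1 - γ), x * (1 - γ) - lam * γ - x')
    let u5 : ℝ × ℝ := (-(x + lam) * γ, x * γ - lam * (1 - γ))
    let u6 : ℝ × ℝ := (0, 0)
    (threatenS {u1} {u2} ∪ threatenS {u2} {u1} = {u2}) ∧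
    (threatenS {u5} {u6} ∪ threatenS {u6} {u5} = {u6}) := by
  intro u1 u2 u5 u6
  have h12 : u1.2 < u2.2 := by simp only [u1, u2]; nlinarith
  have h56 : u5.2 < u6.2 := by simp only [u5, u6]; nlinarith
  constructor <;> ext p <;>
    simp only [threatenS, Set.mem_union, Set.mem_setOf_eq, Set.mem_singleton_iff] <;>
    constructor
  · rintro (⟨rfl, _, rfl, h⟩ | ⟨hp, _, _, _⟩) <;> [exact absurd h (not_lt.2 h12.le); exact hp]
  · rintro rfl; exact Or.inr ⟨rfl, u1, rfl, h12⟩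
  · rintro (⟨rfl, _, rfl, h⟩ | ⟨hp, _, _, _⟩) <;> [exact absurd h (not_lt.2 h56.le); exact hp]
  · rintro rfl; exact Or.inr ⟨rfl, u5, rfl, h56⟩
end

section
/- In Contract 2 with the buyer as leading contract player, the inducible set at the left buyer-owned node is {u², u³}: for all real x, x', y, λ, γ with 0 < γ < 1, y > x > x' > 0, λ > 0 and γ·λ < (1-γ)·x, one has {u², u³} ∪ threatenS({u¹, u², u³}, {u², u³}) = {u², u³}; in particular u¹ cannot be threatened into the set. -/
/-- In Contract 2 with the buyer as leading contract player, the
inducible set at the left buyer-owned node is {u², u³}; in particular u¹ cannot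
be threatened into the set. -/
theorem contract2_buyer_leftNode (x x' y lam γ : ℝ)
    (hγ0 : 0 < γ) (hγ1 : γ < 1) (hxy : x < y) (hx'x : x' < x) (hx' : 0 < x')
    (hlam : 0 < lam) (hdep : γ * lam < (1 - γ) * x) :
    let u1 : ℝ × ℝ := (y, -x')
    let u2 : ℝ × ℝ := (y * γ - (x + lam) * (1 - γ), x * (1 - γ) - lam * γ - x')
    let u3 : ℝ × ℝ := (y - x, x - x')
    (({u2, u3} : Set (ℝ × ℝ)) ∪ threatenS {u1, u2, u3} {u2, u3} = {u2, u3}) ∧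
    u1 ∉ ({u2, u3} : Set (ℝ × ℝ)) ∪ threatenS {u1, u2, u3} {u2, u3} := by
  intro u1 u2 u3
  have hx0 : (0:ℝ) < x := lt_trans hx' hx'x
  have h2 : u1.2 < u2.2 := by simp only [u1, u2]; nlinarith
  have h3 : u1.2 < u3.2 := by simp only [u1, u3]; nlinarith
  -- no witness in {u2, u3} lies strictly below u1 on the seller's coordinate
  have hwit : ∀ b ∈ ({u2, u3} : Set (ℝ × ℝ)), ¬ b.2 < u1.2 := by
    rintro b (hb | hb) <;> subst hb <;> exact not_lt.mpr (le_of_lt (by assumption))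
  have hnot : u1 ∉ ({u2, u3} : Set (ℝ × ℝ)) ∪ threatenS {u1, u2, u3} {u2, u3} := by
    rintro (h | ⟨_, b, hb, hlt⟩)
    · rcases h with h | h
      · exact ne_of_lt h2 (congrArg Prod.snd h)
      · exact ne_of_lt h3 (congrArg Prod.snd h)
    · exact hwit b hb hlt
  refine ⟨?_, hnot⟩
  apply Set.eq_of_subset_of_subset
  · rintro a (ha | ⟨ha, b, hb, hlt⟩)
    · exact ha
    · rcases ha with ha | ha | ha
      · subst ha; exact absurd hlt (hwit b hb)
      · exact Or.inl ha
      · exact Or.inr ha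
  · intro a ha; exact Or.inl ha
end

section
/- In Contract 2 with the buyer as leading contract player, the inducible set at the right buyer-owned node is {u⁴, u⁶}: for all real x, x', y, λ, γ with 0 < γ < 1, y > x > x' > 0, λ > 0 and γ·x < (1-γ)·λ, one has {u⁴, u⁶} ∪ threatenS({u⁴, u⁵, u⁶}, {u⁴, u⁶}) = {u⁴, u⁶}; in particular u⁵ cannot be threatened into the set. -/
/-- In Contract 2 with the buyer as leading contract player, the
inducible set at the right buyer-owned node is {u⁴, u⁶}; in particular u⁵
cannot be threatened into the set. -/
theorem contract2_buyer_rightNode (x x' y lam γ : ℝ)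
    (hγ0 : 0 < γ) (hγ1 : γ < 1) (hxy : x < y) (hx'x : x' < x) (hx' : 0 < x')
    (hlam : 0 < lam) (hdep : γ * x < (1 - γ) * lam) :
    let u4 : ℝ × ℝ := (-x, x)
    let u5 : ℝ × ℝ := (-(x + lam) * γ, x * γ - lam * (1 - γ))
    let u6 : ℝ × ℝ := (0, 0)
    (({u4, u6} : Set (ℝ × ℝ)) ∪ threatenS {u4, u5, u6} {u4, u6} = {u4, u6}) ∧
    u5 ∉ ({u4, u6} : Set (ℝ × ℝ)) ∪ threatenS {u4, u5, u6} {u4, u6} := by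
  intro u4 u5 u6
  have hx : (0:ℝ) < x := lt_trans hx' hx'x
  have h5 : x * γ - lam * (1 - γ) < 0 := by nlinarith
  have hthreat : u5 ∉ threatenS {u4, u5, u6} {u4, u6} := by
    rintro ⟨-, b, hb, hlt⟩
    rcases hb with rfl | rfl
    · simp only [u4, u5] at hlt; linarith
    · simp only [u6, u5] at hlt; linarith
  have hmem : u5 ∉ ({u4, u6} : Set (ℝ × ℝ)) := by
    rintro (h | h)
    · have := congrArg Prod.snd h; simp [u4, u5] at this; linarith
    · have := congrArg Prod.snd h; simp [u6, u5] at this; linarith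
  have heq : ({u4, u6} : Set (ℝ × ℝ)) ∪ threatenS {u4, u5, u6} {u4, u6} = {u4, u6} := by
    apply Set.union_eq_self_of_subset_right
    rintro a ⟨ha, hb⟩
    rcases ha with rfl | rfl | rfl
    · exact Or.inl rfl
    · exact absurd ⟨by simp [threatenS], hb⟩ hthreat
    · exact Or.inr rfl
  exact ⟨heq, fun h => hmem (heq ▸ h)⟩
end

section
/- Contract 2 is Stackelberg resilient when the buyer is leading contract player: for all real x, x', y, λ, γ with 0 < γ < 1/2, y > x > x' > 0, λ > 0, γ·x < (1-γ)·λ and γ·λ < (1-γ)·x, in the buyer's root inducible region I := threatenS({u⁴, u⁶}, {u², u³}) ∪ threatenS({u², u³}, {u⁴, u⁶}), the honest outcome u³ is a member and strictly maximizes the buyer's utility: u³ ∈ I and for every v ∈ I with v ≠ u³ one has v.1 < u³.1. Hence the buyer's optimal contract induces the SPE outcome u³. -/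
/-- Contract 2 is Stackelberg resilient when the buyer is leading
contract player: in the buyer's root inducible region, the honest outcome u³
is a member and strictly maximizes the buyer's utility. -/
theorem contract2_buyer_resilient (x x' y lam γ : ℝ)
    (hγ0 : 0 < γ) (hγ1 : γ < 1 / 2) (hxy : x < y) (hx'x : x' < x) (hx' : 0 < x')
    (hlam : 0 < lam) (hdep1 : γ * x < (1 - γ) * lam) (hdep2 : γ * lam < (1 - γ) * x) :
    let u2 : ℝ × ℝ := (y * γ - (x + lam) * (1 - γ), x * (1 - γ) - lam * γ - x')
    let u3 : ℝ × ℝ := (y - x, x - x')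
    let u4 : ℝ × ℝ := (-x, x)
    let u6 : ℝ × ℝ := (0, 0)
    let I : Set (ℝ × ℝ) := threatenS {u4, u6} {u2, u3} ∪ threatenS {u2, u3} {u4, u6}
    u3 ∈ I ∧ ∀ v ∈ I, v ≠ u3 → v.1 < u3.1 := by
  intro u2 u3 u4 u6 I
  constructor
  · refine Or.inr ⟨Or.inr rfl, u6, Or.inr rfl, ?_⟩
    show (0:ℝ) < x - x'
    linarith
  · rintro v (⟨(rfl | rfl), -⟩ | ⟨(rfl | rfl), -⟩) hne
    · show -x < y - x; linarith
    · show (0:ℝ) < y - x; linarith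
    · show y * γ - (x + lam) * (1 - γ) < y - x
      nlinarith [mul_pos hγ0 hlam, mul_pos hγ0 hx']
    · exact absurd rfl hne
end
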